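/- Let M be a real number with M ≥ 1 and let z be a real number with 0 ≤ z ≤ 1/2. Then cos z + √M · sin z > 0 and log(cos z + √M · sin z) ≥ √M · z − ((M+1)/2) · z². -/

import Mathlib

set_option maxHeartbeats 800000

/-- For `u ≥ 0`, `log(1+u) ≥ u - u²/2`. -/
lemma log_one_add_ge_quad (u : ℝ) (hu : 0 ≤ u) :
    u - u ^ 2 / 2 ≤ Real.log (1 + u) := by
  have hderiv : ∀ y : ℝ, 0 < y →
      HasDerivAt (fun y : ℝ => Real.log (1 + y) - (y - y ^ 2 / 2))
        (1 / (1 + y) - (1 - 2 * y ^ 1 / 2)) y := by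
    intro y hy
    have h1 : HasDerivAt (fun y : ℝ => 1 + y) 1 y :=
      (hasDerivAt_id y).const_add 1
    have h2 : HasDerivAt (fun y : ℝ => Real.log (1 + y)) (1 / (1 + y)) y := by
      simpa using h1.log (by linarith)
    have h3 : HasDerivAt (fun y : ℝ => y - y ^ 2 / 2) (1 - 2 * y ^ 1 / 2) y :=
      (hasDerivAt_id y).sub ((hasDerivAt_pow 2 y).div_const 2)
    exact h2.sub h3
  have hcont : ContinuousOn (fun y : ℝ => Real.log (1 + y) - (y - y ^ 2 / 2))
      (Set.Ici 0) := by
    apply ContinuousOn.sub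
    · apply Real.continuousOn_log.comp
        (continuous_const.add continuous_id).continuousOn
      intro y hy
      have hy' : (0:ℝ) ≤ y := hy
      simp only [Set.mem_compl_iff, Set.mem_singleton_iff]
      intro h
      have : (1:ℝ) + y = 0 := h
      linarith
    · fun_prop
  have hmono : MonotoneOn (fun y : ℝ => Real.log (1 + y) - (y - y ^ 2 / 2))
      (Set.Ici 0) := by
    apply monotoneOn_of_deriv_nonneg (convex_Ici 0) hcont
    · intro y hy
      rw [interior_Ici] at hy
      exact ((hderiv y hy).differentiableAt).differentiableWithinAt
    · intro y hy
      rw [interior_Ici] at hy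
      have hy0 : (0:ℝ) < y := hy
      rw [(hderiv y hy0).deriv]
      have h1 : (0:ℝ) < 1 + y := by linarith
      rw [sub_nonneg, pow_one, le_div_iff₀ h1]
      nlinarith
  have h0 : (0:ℝ) ∈ Set.Ici (0:ℝ) := Set.mem_Ici.mpr le_rfl
  have hu' : u ∈ Set.Ici (0:ℝ) := Set.mem_Ici.mpr hu
  have := hmono h0 hu' hu
  simp only [add_zero, Real.log_one] at this
  linarith

/-- **Analytic core of Proposition 4.** For real `M ≥ 1` and `0 ≤ z ≤ 1/2`,
`cos z + √M·sin z > 0` and `log(cos z + √M·sin z) ≥ √M·z − ((M+1)/2)·z²`. -/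
theorem stmt_7 (M : ℝ) (hM : 1 ≤ M) (z : ℝ) (hz0 : 0 ≤ z) (hz1 : z ≤ 1/2) :
    0 < Real.cos z + Real.sqrt M * Real.sin z ∧
    Real.sqrt M * z - (M + 1)/2 * z ^ 2
      ≤ Real.log (Real.cos z + Real.sqrt M * Real.sin z) := by
  set s := Real.sqrt M with hs_def
  have hM0 : (0:ℝ) ≤ M := by linarith
  have hs1 : 1 ≤ s := Real.one_le_sqrt.mpr hM
  have hs0 : 0 ≤ s := by linarith
  have hsq : s ^ 2 = M := Real.sq_sqrt hM0
  have hsin0 : 0 ≤ Real.sin z :=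
    Real.sin_nonneg_of_nonneg_of_le_pi hz0 (by linarith [Real.pi_gt_three])
  have hcoslb : 1 - z ^ 2 / 2 ≤ Real.cos z := Real.one_sub_sq_div_two_le_cos
  have hcospos : 0 < Real.cos z := by nlinarith
  have hpos : 0 < Real.cos z + s * Real.sin z := by
    have : 0 ≤ s * Real.sin z := mul_nonneg hs0 hsin0
    linarith
  refine ⟨hpos, ?_⟩
  -- elementary powers of z
  have hzsq : z ^ 2 ≤ 1/4 := by nlinarith
  have hz2nn : (0:ℝ) ≤ z ^ 2 := sq_nonneg z
  have hz3nn : (0:ℝ) ≤ z ^ 3 := by positivity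
  have hz3 : z ^ 3 ≤ z / 4 := by nlinarith [mul_nonneg hz0 (by linarith : (0:ℝ) ≤ 1/4 - z ^ 2)]
  have hz4 : z ^ 4 ≤ z ^ 3 / 2 := by nlinarith [mul_nonneg hz3nn (by linarith : (0:ℝ) ≤ 1/2 - z)]
  have hz5 : z ^ 5 ≤ z ^ 3 / 4 := by
    nlinarith [mul_nonneg hz3nn (by linarith : (0:ℝ) ≤ 1/4 - z ^ 2)]
  -- trig bounds
  have hsinle : Real.sin z ≤ z := Real.sin_le hz0
  have hsinge : z - z ^ 3 / 4 ≤ Real.sin z := by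
    rcases eq_or_lt_of_le hz0 with h | h
    · simp [← h]
    · have := Real.sin_gt_sub_cube h
      linarith
  have hcosle1 : Real.cos z ≤ 1 := Real.cos_le_one z
  -- quartic upper bound on cos via half angle
  have hhalf : Real.cos z = 1 - 2 * Real.sin (z/2) ^ 2 := by
    have h1 := Real.cos_two_mul (z/2)
    have h2 := Real.sin_sq_add_cos_sq (z/2)
    rw [show 2 * (z/2) = z by ring] at h1
    linarith
  have hsinhalf : z/2 - (z/2) ^ 3 / 4 ≤ Real.sin (z/2) := by
    rcases eq_or_lt_of_le hz0 with h | h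
    · simp [← h]
    · have := Real.sin_gt_sub_cube (by linarith : 0 < z/2)
      linarith [pow_nonneg (by linarith : (0:ℝ) ≤ z/2) 3]
  have hsinhalf0 : 0 ≤ z/2 - (z/2) ^ 3 / 4 := by nlinarith
  have hcosub : Real.cos z ≤ 1 - 2 * (z/2 - (z/2) ^ 3 / 4) ^ 2 := by
    rw [hhalf]
    nlinarith [sq_nonneg (Real.sin (z/2) - (z/2 - (z/2) ^ 3 / 4))]
  have hbge : z ^ 2 / 2 - z ^ 4 / 16 ≤ 1 - Real.cos z := by
    have hexp : 2 * (z/2 - (z/2) ^ 3 / 4) ^ 2 = z ^ 2 / 2 - z ^ 4 / 16 + z ^ 6 / 512 := by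
      ring
    have h6 : (0:ℝ) ≤ z ^ 6 := by positivity
    linarith [hcosub]
  have hb0 : (0:ℝ) ≤ 1 - Real.cos z := by linarith
  have hbu : (1:ℝ) - Real.cos z ≤ z ^ 2 / 2 := by linarith
  -- set u
  set u : ℝ := Real.cos z + s * Real.sin z - 1 with hu_def
  have hzc : (0:ℝ) ≤ z - z ^ 3 / 4 := by linarith
  have hA0 : 0 ≤ s * (z - z ^ 3 / 4) := mul_nonneg hs0 hzc
  have hAl : s * (z - z ^ 3 / 4) ≤ s * Real.sin z :=
    mul_le_mul_of_nonneg_left hsinge hs0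
  have hAu : s * Real.sin z ≤ s * z := mul_le_mul_of_nonneg_left hsinle hs0
  have hul : s * (z - z ^ 3 / 4) - z ^ 2 / 2 ≤ u := by
    rw [hu_def]; linarith [hAl, hcoslb]
  have hu0 : 0 ≤ u := by
    have h1 : z - z ^ 3 / 4 ≤ s * (z - z ^ 3 / 4) := le_mul_of_one_le_left hzc hs1
    have h2 : z ^ 2 ≤ z / 2 := by nlinarith
    linarith
  have hlog := log_one_add_ge_quad u hu0
  have hrw : 1 + u = Real.cos z + s * Real.sin z := by rw [hu_def]; ring
  rw [hrw] at hlog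
  -- bound u^2 from above
  have hBnn : (0:ℝ) ≤ z ^ 2 / 2 - z ^ 4 / 16 := by nlinarith
  have hab : s * (z - z ^ 3 / 4) * (z ^ 2 / 2 - z ^ 4 / 16)
      ≤ (s * Real.sin z) * (1 - Real.cos z) :=
    mul_le_mul hAl hbge hBnn (mul_nonneg hs0 hsin0)
  have h1 : (s * Real.sin z) ^ 2 ≤ M * z ^ 2 := by
    have hss : Real.sin z ^ 2 ≤ z ^ 2 := by nlinarith
    have := mul_le_mul_of_nonneg_left hss (sq_nonneg s)
    nlinarith
  have h2 : (1 - Real.cos z) ^ 2 ≤ z ^ 4 / 4 := by nlinarith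
  have habexp : 2 * (s * (z - z ^ 3 / 4) * (z ^ 2 / 2 - z ^ 4 / 16))
      = s * z ^ 3 - 3/8 * s * z ^ 5 + s * z ^ 7 / 32 := by ring
  have hz7 : (0:ℝ) ≤ s * z ^ 7 / 32 := by positivity
  have hu2 : u ^ 2 ≤ M * z ^ 2 - s * z ^ 3 + 3/8 * s * z ^ 5 + z ^ 4 / 4 := by
    have hexp : u ^ 2 = (s * Real.sin z) ^ 2
        - 2 * ((s * Real.sin z) * (1 - Real.cos z)) + (1 - Real.cos z) ^ 2 := by
      rw [hu_def]; ring
    rw [hexp]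
    linarith
  -- key absorption: z⁴/8 + (3/16)·s·z⁵ ≤ s·z³/4
  have hkey : z ^ 4 / 8 + 3/16 * s * z ^ 5 ≤ s * z ^ 3 / 4 := by
    have h5 : s * z ^ 5 ≤ s * (z ^ 3 / 4) := mul_le_mul_of_nonneg_left hz5 hs0
    have h4 : z ^ 3 ≤ s * z ^ 3 := le_mul_of_one_le_left hz3nn hs1
    linarith [h5, h4, hz4]
  have hfinal : s * z - (M + 1)/2 * z ^ 2 ≤ u - u ^ 2 / 2 := by
    linarith [hul, hu2, hkey]
  linarith
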